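/- arXiv:2511.22778 — 2 statements merged into one kernel-verified Lean document; each statement's English description precedes it below -/
import Mathlib

section
/- Let K be a field, let I be a proper interval of ℤ², and let P be a nonempty simple polyomino with P ⊆ P_I such that no cell of P shares a vertex with the boundary of I, and set P^c := P_I \ P. Then there exist no finite simple graph G and no bijection ε from V(P^c) to the edge set E(G) such that, under the identification of the variable x_v of S_{P^c} with the variable t_{ε(v)}, the ideal I_{P^c} equals the toric ideal of the edge ring of G. -/
open MvPolynomial

namespace PolyoStmt

/-- A cell of `ℤ²`, identified with its lower-left corner. -/
abbrev Cell : Type := ℤ × ℤ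

/-- The four vertices of a cell. -/
def cellVertices (c : Cell) : Set (ℤ × ℤ) :=
  {c, (c.1 + 1, c.2), (c.1, c.2 + 1), (c.1 + 1, c.2 + 1)}

/-- The vertex set of a collection of cells. -/
def vertexSet (P : Finset Cell) : Set (ℤ × ℤ) := ⋃ c ∈ P, cellVertices c

/-- Two cells share a common edge. -/
def SharesEdge (a b : Cell) : Prop :=
  (a.1 = b.1 ∧ (b.2 = a.2 + 1 ∨ a.2 = b.2 + 1)) ∨
  (a.2 = b.2 ∧ (b.1 = a.1 + 1 ∨ a.1 = b.1 + 1))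

/-- Two cells share at least one vertex (equivalently, the closed unit squares meet). -/
def SharesVertex (a b : Cell) : Prop := (cellVertices a ∩ cellVertices b).Nonempty

/-- Any two members of `S` are joined by a path inside `S` whose consecutive
members are related by `r`. -/
def ConnectedVia (S : Set Cell) (r : Cell → Cell → Prop) : Prop :=
  ∀ a ∈ S, ∀ b ∈ S,
    Relation.ReflTransGen (fun x y => x ∈ S ∧ y ∈ S ∧ r x y) a b

/-- A polyomino: a nonempty, edge-connected finite collection of cells. -/
def IsPolyomino (P : Finset Cell) : Prop :=
  P.Nonempty ∧ ConnectedVia (↑P) SharesEdge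

/-- A collection of cells is simple if its complement is edge-connected (no holes). -/
def IsSimple (P : Finset Cell) : Prop :=
  ConnectedVia ((↑P : Set Cell)ᶜ) SharesEdge

/-- A collection of cells is weakly connected if it is connected through shared vertices. -/
def IsWeaklyConnected (P : Finset Cell) : Prop :=
  ConnectedVia (↑P) SharesVertex

def IsRowConvex (P : Finset Cell) : Prop :=
  ∀ c ∈ P, ∀ d ∈ P, c.2 = d.2 → ∀ x : ℤ, c.1 ≤ x → x ≤ d.1 → (x, c.2) ∈ P

def IsColumnConvex (P : Finset Cell) : Prop :=
  ∀ c ∈ P, ∀ d ∈ P, c.1 = d.1 → ∀ y : ℤ, c.2 ≤ y → y ≤ d.2 → (c.1, y) ∈ P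

def IsConvex (P : Finset Cell) : Prop := IsRowConvex P ∧ IsColumnConvex P

/-- `P` is thin: it contains no square tetromino. -/
def IsThin (P : Finset Cell) : Prop :=
  ¬ ∃ c : Cell, c ∈ P ∧ (c.1 + 1, c.2) ∈ P ∧ (c.1, c.2 + 1) ∈ P ∧ (c.1 + 1, c.2 + 1) ∈ P

/-- The cell with lower-left corner `c` is contained in the interval `[a, b]`. -/
def CellInBox (a b c : Cell) : Prop := a ≤ c ∧ c.1 + 1 ≤ b.1 ∧ c.2 + 1 ≤ b.2

/-- `[a, b]` is an inner interval of `P`: it is proper and all cells inside it belong to `P`. -/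
def IsInnerInterval (P : Finset Cell) (a b : Cell) : Prop :=
  a.1 < b.1 ∧ a.2 < b.2 ∧ ∀ c : Cell, CellInBox a b c → c ∈ P

/-- The cells of the rectangle determined by the interval `[a, b]`. -/
noncomputable def rectCells (a b : Cell) : Finset Cell :=
  (Finset.Icc a b).filter fun c => c.1 + 1 ≤ b.1 ∧ c.2 + 1 ≤ b.2

/-- The type indexing the variables of `S_P`: the vertices of `P`. -/
abbrev Vtx (P : Finset Cell) : Type := {v : ℤ × ℤ // v ∈ vertexSet P}

/-- The polynomial ring `S_P = K[x_v : v ∈ V(P)]`. -/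
abbrev polyRing (K : Type) [Field K] (P : Finset Cell) : Type :=
  MvPolynomial (Vtx P) K

/-- The polyomino ideal (ideal of inner 2-minors) of `P`. -/
noncomputable def polyoIdeal (K : Type) [Field K] (P : Finset Cell) :
    Ideal (polyRing K P) :=
  Ideal.span { f | ∃ (a b : ℤ × ℤ) (ha : a ∈ vertexSet P) (hb : b ∈ vertexSet P)
      (hc : ((a.1, b.2) : ℤ × ℤ) ∈ vertexSet P)
      (hd : ((b.1, a.2) : ℤ × ℤ) ∈ vertexSet P),
      IsInnerInterval P a b ∧
      f = X ⟨a, ha⟩ * X ⟨b, hb⟩ - X ⟨(a.1, b.2), hc⟩ * X ⟨(b.1, a.2), hd⟩ }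

/-- The coordinate ring `K[P] = S_P / I_P`. -/
abbrev coordRing (K : Type) [Field K] (P : Finset Cell) : Type :=
  polyRing K P ⧸ polyoIdeal K P

/-- The degree-`k` graded component of `K[P]` (the image of the homogeneous
polynomials of degree `k`). -/
noncomputable def gradedPiece (K : Type) [Field K] (P : Finset Cell) (k : ℕ) :
    Submodule K (coordRing K P) :=
  (MvPolynomial.homogeneousSubmodule (Vtx P) K k).map
    (Ideal.Quotient.mkₐ K (polyoIdeal K P)).toLinearMap

/-- The Hilbert–Poincaré series of `K[P]`, as a formal power series over `ℤ`. -/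
noncomputable def hilbertSeries (K : Type) [Field K] (P : Finset Cell) : PowerSeries ℤ :=
  PowerSeries.mk fun k => (Module.finrank K (gradedPiece K P k) : ℤ)

/-- Cells `A` and `B` of `P` are attacking. -/
def Attacking (P : Finset Cell) (A B : Cell) : Prop :=
  A ≠ B ∧
  ((A.2 = B.2 ∧ ∀ x : ℤ, min A.1 B.1 ≤ x → x ≤ max A.1 B.1 → (x, A.2) ∈ P) ∨
   (A.1 = B.1 ∧ ∀ y : ℤ, min A.2 B.2 ≤ y → y ≤ max A.2 B.2 → (A.1, y) ∈ P))

/-- The set of `k`-rook configurations of `P`. -/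
def RookConfigs (P : Finset Cell) (k : ℕ) : Set (Finset Cell) :=
  {F | ↑F ⊆ (↑P : Set Cell) ∧ F.card = k ∧
    (↑F : Set Cell).Pairwise fun A B => ¬ Attacking P A B}

/-- The number of `k`-rook configurations of `P`. -/
noncomputable def rookNum (P : Finset Cell) (k : ℕ) : ℕ := Set.ncard (RookConfigs P k)

/-- The rook polynomial of `P`, regarded as a formal power series over `ℤ`
(all coefficients beyond the rook number vanish). -/
noncomputable def rookSeries (P : Finset Cell) : PowerSeries ℤ :=
  PowerSeries.mk fun k => (rookNum P k : ℤ)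

/-- One switch move between rook configurations of `P`. -/
def SwitchStep (P : Finset Cell) (F F' : Finset Cell) : Prop :=
  ∃ a b : Cell, IsInnerInterval P a b ∧
    ((a ∈ F ∧ (b.1 - 1, b.2 - 1) ∈ F ∧
        F' = (F \ {a, (b.1 - 1, b.2 - 1)}) ∪ {(a.1, b.2 - 1), (b.1 - 1, a.2)}) ∨
     ((a.1, b.2 - 1) ∈ F ∧ (b.1 - 1, a.2) ∈ F ∧
        F' = (F \ {(a.1, b.2 - 1), (b.1 - 1, a.2)}) ∪ {a, (b.1 - 1, b.2 - 1)}))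

/-- Equivalence of `k`-rook configurations up to switches. -/
def switchSetoid (P : Finset Cell) (k : ℕ) : Setoid (RookConfigs P k) :=
  ⟨fun F F' => Relation.EqvGen (SwitchStep P) F.1 F'.1,
   fun _ => Relation.EqvGen.refl _,
   fun h => Relation.EqvGen.symm _ _ h,
   fun h h' => Relation.EqvGen.trans _ _ _ h h'⟩

/-- The number of equivalence classes of `k`-rook configurations up to switches. -/
noncomputable def switchRookNum (P : Finset Cell) (k : ℕ) : ℕ :=
  Nat.card (Quotient (switchSetoid P k))

/-- The switching rook polynomial of `P`, regarded as a formal power series over `ℤ`. -/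
noncomputable def switchRookSeries (P : Finset Cell) : PowerSeries ℤ :=
  PowerSeries.mk fun k => (switchRookNum P k : ℤ)

/-- The unit horizontal segment from `(x, y)` to `(x + 1, y)` is an edge of a cell of `P`. -/
def HorizEdge (P : Finset Cell) (x y : ℤ) : Prop := (x, y) ∈ P ∨ (x, y - 1) ∈ P

/-- The unit vertical segment from `(x, y)` to `(x, y + 1)` is an edge of a cell of `P`. -/
def VertEdge (P : Finset Cell) (x y : ℤ) : Prop := (x, y) ∈ P ∨ (x - 1, y) ∈ P

/-- `p` and `q` lie on a common horizontal or vertical edge interval of `P`. -/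
def OnCommonEdgeInterval (P : Finset Cell) (p q : ℤ × ℤ) : Prop :=
  (p.2 = q.2 ∧ ∀ x : ℤ, min p.1 q.1 ≤ x → x < max p.1 q.1 → HorizEdge P x p.2) ∨
  (p.1 = q.1 ∧ ∀ y : ℤ, min p.2 q.2 ≤ y → y < max p.2 q.2 → VertEdge P p.1 y)

/-- A zig-zag walk of `P`, consisting of `n + 2` distinct inner intervals
`I_i = [lo i, hi i]` with distinguished corners `v i`, `z i`, `u i`. -/
structure ZigZagWalk (P : Finset Cell) where
  n : ℕ
  lo : ZMod (n + 2) → ℤ × ℤ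
  hi : ZMod (n + 2) → ℤ × ℤ
  v : ZMod (n + 2) → ℤ × ℤ
  z : ZMod (n + 2) → ℤ × ℤ
  u : ZMod (n + 2) → ℤ × ℤ
  inner : ∀ i, IsInnerInterval P (lo i) (hi i)
  distinct : ∀ i j, lo i = lo j → hi i = hi j → i = j
  corners : ∀ i,
    (({v i, z i} : Set (ℤ × ℤ)) = {lo i, hi i} ∧
      ({u i, v (i + 1)} : Set (ℤ × ℤ)) = {((lo i).1, (hi i).2), ((hi i).1, (lo i).2)}) ∨
    (({v i, z i} : Set (ℤ × ℤ)) = {((lo i).1, (hi i).2), ((hi i).1, (lo i).2)} ∧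
      ({u i, v (i + 1)} : Set (ℤ × ℤ)) = {lo i, hi i})
  inter : ∀ i,
    Set.Icc (lo i) (hi i) ∩ Set.Icc (lo (i + 1)) (hi (i + 1)) = {v (i + 1)}
  edgeInt : ∀ i, OnCommonEdgeInterval P (v i) (v (i + 1))
  noCommon : ∀ i j, i ≠ j → ∀ a b : ℤ × ℤ, IsInnerInterval P a b →
    ¬ (z i ∈ Set.Icc a b ∧ z j ∈ Set.Icc a b)
  hv : ∀ i, v i ∈ vertexSet P
  hz : ∀ i, z i ∈ vertexSet P
  hu : ∀ i, u i ∈ vertexSet P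

/-- `P` admits a zig-zag walk. -/
def HasZigZagWalk (P : Finset Cell) : Prop := Nonempty (ZigZagWalk P)

/-- The binomial `f_W` attached to a zig-zag walk `W`. -/
noncomputable def zigZagBinomial (K : Type) [Field K] {P : Finset Cell}
    (W : ZigZagWalk P) : polyRing K P :=
  (∏ i : ZMod (W.n + 2), X ⟨W.z i, W.hz i⟩) - ∏ i : ZMod (W.n + 2), X ⟨W.u i, W.hu i⟩

/-- A closed path polyomino. -/
def IsClosedPath (P : Finset Cell) : Prop :=
  IsPolyomino P ∧
  ∃ (n : ℕ) (A : ZMod (n + 6) → Cell),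
    Function.Injective A ∧
    (∀ i, A i ∈ P) ∧ (∀ c ∈ P, ∃ i, A i = c) ∧
    (∀ i, SharesEdge (A i) (A (i + 1))) ∧
    (∀ i j : ZMod (n + 6),
      j ∉ ({i - 2, i - 1, i, i + 1, i + 2} : Set (ZMod (n + 6))) →
      ¬ SharesVertex (A i) (A j))

/-- A grid polyomino. -/
def IsGridPolyomino (P : Finset Cell) : Prop :=
  IsPolyomino P ∧
  ∃ (m n : ℤ) (r s : ℕ) (hr : 0 < r) (hs : 0 < s)
    (x x' : Fin r → ℤ) (y y' : Fin s → ℤ),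
    (∀ i, x i < x' i) ∧ (∀ j, y j < y' j) ∧
    1 < x ⟨0, hr⟩ ∧ x' ⟨r - 1, Nat.sub_lt hr one_pos⟩ < m ∧
    1 < y ⟨0, hs⟩ ∧ y' ⟨s - 1, Nat.sub_lt hs one_pos⟩ < n ∧
    (∀ i : Fin r, ∀ h : i.1 + 1 < r, x ⟨i.1 + 1, h⟩ = x' i + 1) ∧
    (∀ j : Fin s, ∀ h : j.1 + 1 < s, y ⟨j.1 + 1, h⟩ = y' j + 1) ∧
    P = rectCells (1, 1) (m, n) \
      Finset.univ.biUnion (fun i : Fin r =>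
        Finset.univ.biUnion fun j : Fin s => rectCells (x i, y j) (x' i, y' j))

/-- A maximal horizontal edge interval of `P`. -/
structure MaxHorizInterval (P : Finset Cell) where
  row : ℤ
  left : ℤ
  right : ℤ
  le : left ≤ right
  edges : ∀ x : ℤ, left ≤ x → x < right → HorizEdge P x row
  notLeft : ¬ HorizEdge P (left - 1) row
  notRight : ¬ HorizEdge P right row

/-- Membership of a lattice point in a maximal horizontal edge interval. -/
def MaxHorizInterval.mem {P : Finset Cell} (H : MaxHorizInterval P) (p : ℤ × ℤ) : Prop :=
  p.2 = H.row ∧ H.left ≤ p.1 ∧ p.1 ≤ H.right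

/-- A maximal vertical edge interval of `P`. -/
structure MaxVertInterval (P : Finset Cell) where
  col : ℤ
  bot : ℤ
  top : ℤ
  le : bot ≤ top
  edges : ∀ y : ℤ, bot ≤ y → y < top → VertEdge P col y
  notBot : ¬ VertEdge P col (bot - 1)
  notTop : ¬ VertEdge P col top

/-- Membership of a lattice point in a maximal vertical edge interval. -/
def MaxVertInterval.mem {P : Finset Cell} (V : MaxVertInterval P) (p : ℤ × ℤ) : Prop :=
  p.1 = V.col ∧ V.bot ≤ p.2 ∧ p.2 ≤ V.top

/-- The homomorphism `Φ_P : S_P → K[v₁, …, v_m, h₁, …, h_n]` sending `x_a` to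
`v_i h_j`, where `V_i` (given by `Vmap`) and `H_j` (given by `Hmap`) are the maximal
vertical and horizontal edge intervals through `a`. -/
noncomputable def PhiMap (K : Type) [Field K] (P : Finset Cell)
    (Vmap : Vtx P → MaxVertInterval P) (Hmap : Vtx P → MaxHorizInterval P) :
    polyRing K P →ₐ[K] MvPolynomial (MaxVertInterval P ⊕ MaxHorizInterval P) K :=
  aeval fun a => X (Sum.inl (Vmap a)) * X (Sum.inr (Hmap a))

/-- The monomial `y_u y_w` attached to an edge `{u, w}` of a graph. -/
noncomputable def edgeMonomial (K : Type) [Field K] {VG : Type} (e : Sym2 VG) :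
    MvPolynomial VG K :=
  Sym2.lift ⟨fun u w => X u * X w, fun u w => mul_comm _ _⟩ e

/-- A parallelogram polyomino. -/
def IsParallelogram (P : Finset Cell) : Prop :=
  IsPolyomino P ∧ IsConvex P ∧
  ∃ a b : Cell, (∀ c ∈ P, a ≤ c ∧ c ≤ b) ∧ a ∈ P ∧ b ∈ P

/-- A frame polyomino: the complement of a parallelogram polyomino inside a rectangle,
the parallelogram sharing no vertex with the boundary of the rectangle. -/
def IsFrame (P : Finset Cell) : Prop :=
  IsPolyomino P ∧
  ∃ (a b : Cell) (Q : Finset Cell), a.1 < b.1 ∧ a.2 < b.2 ∧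
    IsParallelogram Q ∧ Q ⊆ rectCells a b ∧
    (∀ c ∈ Q, a.1 < c.1 ∧ c.1 + 1 < b.1 ∧ a.2 < c.2 ∧ c.2 + 1 < b.2) ∧
    P = rectCells a b \ Q


section MSAux

variable {V : Type*}

lemma pair_comm' (a b : V) : ({a, b} : Multiset V) = {b, a} := by
  change a ::ₘ b ::ₘ 0 = b ::ₘ a ::ₘ 0
  exact Multiset.cons_swap a b 0

lemma pair_eq_iff {a b c d : V} :
    ({a, b} : Multiset V) = {c, d} ↔ (a = c ∧ b = d) ∨ (a = d ∧ b = c) := by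
  constructor
  · intro h
    change a ::ₘ ({b} : Multiset V) = c ::ₘ ({d} : Multiset V) at h
    rw [Multiset.cons_eq_cons] at h
    rcases h with ⟨h1, h2⟩ | ⟨hne, cs, h1, h2⟩
    · exact Or.inl ⟨h1, by simpa using h2⟩
    · have hcs : cs = 0 := by
        have h3 := congrArg Multiset.card h1
        simp at h3
        exact h3
      subst hcs
      simp only [Multiset.cons_zero, Multiset.singleton_inj] at h1 h2
      exact Or.inr ⟨h2.symm, h1⟩
  · rintro (⟨rfl, rfl⟩ | ⟨rfl, rfl⟩)
    · rfl
    · exact pair_comm' _ _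

lemma mem_pair_iff {a c d : V} : a ∈ ({c, d} : Multiset V) ↔ a = c ∨ a = d := by
  simp

lemma pair_decomp {A : Multiset V} (hA : ∃ u v, u ≠ v ∧ A = {u, v}) {s : V}
    (hs : s ∈ A) : ∃ α, s ≠ α ∧ A = {s, α} := by
  obtain ⟨u, v, huv, rfl⟩ := hA
  rcases mem_pair_iff.mp hs with rfl | rfl
  · exact ⟨v, huv, rfl⟩
  · exact ⟨u, fun h => huv h.symm, pair_comm' _ _⟩

lemma pair_add (a b : V) (m : Multiset V) :
    ({a, b} : Multiset V) + m = a ::ₘ b ::ₘ m := by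
  change (a ::ₘ b ::ₘ 0) + m = _
  simp [Multiset.cons_add]

lemma quad_shuffle (A B C D : V) :
    ({A, B} : Multiset V) + {C, D} = {A, D} + {C, B} := by
  rw [pair_add, pair_add]
  change A ::ₘ B ::ₘ (C ::ₘ D ::ₘ 0) = A ::ₘ D ::ₘ (C ::ₘ B ::ₘ 0)
  congr 1
  rw [Multiset.cons_swap B C, Multiset.cons_swap D C]
  congr 1
  exact Multiset.cons_swap B D 0

lemma card_pair' {A : Multiset V} (hA : ∃ u v, u ≠ v ∧ A = {u, v}) :
    Multiset.card A = 2 := by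
  obtain ⟨u, v, _, rfl⟩ := hA; rfl

/-- the step lemma -/
lemma step_lemma {A B A' B' : Multiset V}
    (hA : ∃ u v, u ≠ v ∧ A = {u, v}) (hB : ∃ u v, u ≠ v ∧ B = {u, v})
    (hA' : ∃ u v, u ≠ v ∧ A' = {u, v}) (hB' : ∃ u v, u ≠ v ∧ B' = {u, v})
    (hAB : A ≠ B) (hAA' : A ≠ A')
    (hrel : A + B' = A' + B) :
    ∃ s α γ t, α ≠ γ ∧ s ≠ α ∧ s ≠ γ ∧ t ≠ α ∧ t ≠ γ ∧
      A = {s, α} ∧ B = {s, γ} ∧ A' = {α, t} ∧ B' = {γ, t} := by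
  classical
  -- shared element of A and B
  have hshared : ∃ s, s ∈ A ∧ s ∈ B := by
    by_contra hno
    push_neg at hno
    have hle : A ≤ A' := by
      rw [Multiset.le_iff_count]
      intro v
      have hcount : Multiset.count v A + Multiset.count v B' =
          Multiset.count v A' + Multiset.count v B := by
        rw [← Multiset.count_add, ← Multiset.count_add, hrel]
      by_cases hv : v ∈ A
      · have : Multiset.count v B = 0 := Multiset.count_eq_zero.mpr (hno v hv)
        omega
      · have : Multiset.count v A = 0 := Multiset.count_eq_zero.mpr hv
        omega
    exact hAA' (Multiset.eq_of_le_of_card_le hle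
      (by rw [card_pair' hA, card_pair' hA']))
  obtain ⟨s, hsA, hsB⟩ := hshared
  obtain ⟨α, hsα, hAd⟩ := pair_decomp hA hsA
  obtain ⟨γ, hsγ, hBd⟩ := pair_decomp hB hsB
  have hαγ : α ≠ γ := by
    rintro rfl
    exact hAB (hAd.trans hBd.symm)
  -- cancel s
  have hcons : α ::ₘ B' = γ ::ₘ A' := by
    have : s ::ₘ α ::ₘ B' = s ::ₘ γ ::ₘ A' := by
      have h1 : s ::ₘ α ::ₘ B' = A + B' := by rw [hAd, pair_add]
      have h2 : s ::ₘ γ ::ₘ A' = B + A' := by rw [hBd, pair_add]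
      rw [h1, h2, hrel, add_comm]
    exact (Multiset.cons_inj_right s).mp this
  have hγB' : γ ∈ B' := by
    have : γ ∈ α ::ₘ B' := hcons ▸ Multiset.mem_cons_self γ A'
    rcases Multiset.mem_cons.mp this with h | h
    · exact absurd h (fun h => hαγ h.symm)
    · exact h
  obtain ⟨t, hγt, hB'd⟩ := pair_decomp hB' hγB'
  have hA'd : A' = {α, t} := by
    have h5 : γ ::ₘ α ::ₘ t ::ₘ 0 = γ ::ₘ A' := by
      rw [← hcons, hB'd]
      show γ ::ₘ α ::ₘ t ::ₘ 0 = α ::ₘ (γ ::ₘ t ::ₘ 0)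
      exact (Multiset.cons_swap α γ _).symm
    exact ((Multiset.cons_inj_right γ).mp h5).symm
  have htα : t ≠ α := by
    obtain ⟨u, v, huv, hA'uv⟩ := hA'
    rcases pair_eq_iff.mp (hA'uv.symm.trans hA'd) with ⟨h1, h2⟩ | ⟨h1, h2⟩
    · subst h1; subst h2; exact fun h => huv h.symm
    · subst h1; subst h2; exact huv
  exact ⟨s, α, γ, t, hαγ, hsα, hsγ, htα, fun h => hγt h.symm, hAd, hBd, hA'd, hB'd⟩


section Ladder
variable {V : Type*}

lemma ladder_lemma {f g : ℤ → Multiset V} {lo hi : ℤ} (hlt : lo < hi)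
    (hedge : ∀ y, lo ≤ y → y ≤ hi →
      (∃ u v, u ≠ v ∧ f y = {u, v}) ∧ (∃ u v, u ≠ v ∧ g y = {u, v}))
    (hfinj : ∀ y y', lo ≤ y → y ≤ hi → lo ≤ y' → y' ≤ hi → f y = f y' → y = y')
    (hfg : ∀ y y', lo ≤ y → y ≤ hi → lo ≤ y' → y' ≤ hi → f y ≠ g y')
    (hrel : ∀ y y', lo ≤ y → y < y' → y' ≤ hi → f y + g y' = f y' + g y) :
    ∃ (α γ : V) (d : ℤ → V), α ≠ γ ∧ ∀ y, lo ≤ y → y ≤ hi →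
      f y = {α, d y} ∧ g y = {γ, d y} ∧ α ≠ d y ∧ γ ≠ d y := by
  classical
  have hlo : lo ≤ lo := le_refl lo
  have hhi1 : lo ≤ hi := le_of_lt hlt
  obtain ⟨s, α, γ, t0, hαγ, hsα, hsγ, _, _, hAd, hBd, _, _⟩ :=
    step_lemma (hedge lo hlo hhi1).1 (hedge lo hlo hhi1).2
      (hedge hi hhi1 le_rfl).1 (hedge hi hhi1 le_rfl).2
      (hfg lo lo hlo hhi1 hlo hhi1)
      (fun h => (by omega : lo ≠ hi) (hfinj lo hi hlo hhi1 hhi1 le_rfl h))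
      (hrel lo hi hlo hlt le_rfl)
  have key : ∀ y, lo ≤ y → y ≤ hi →
      ∃ t, f y = {α, t} ∧ g y = {γ, t} ∧ α ≠ t ∧ γ ≠ t := by
    intro y h1 h2
    rcases eq_or_lt_of_le h1 with rfl | hlty
    · exact ⟨s, by rw [hAd]; exact pair_comm' _ _, by rw [hBd]; exact pair_comm' _ _,
        fun h => hsα h.symm, fun h => hsγ h.symm⟩
    · obtain ⟨s2, α2, γ2, t2, hαγ2, hsα2, hsγ2, htα2, htγ2, hAd2, hBd2, hA'd2, hB'd2⟩ :=
        step_lemma (hedge lo hlo hhi1).1 (hedge lo hlo hhi1).2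
          (hedge y h1 h2).1 (hedge y h1 h2).2
          (hfg lo lo hlo hhi1 hlo hhi1)
          (fun h => (by omega : lo ≠ y) (hfinj lo y hlo hhi1 h1 h2 h))
          (hrel lo y hlo hlty h2)
      -- s2 = s
      have hs2 : s2 = s := by
        rcases pair_eq_iff.mp (hAd.symm.trans hAd2) with ⟨h3, h4⟩ | ⟨h3, h4⟩
        · exact h3.symm
        · -- s = α2, α = s2 : then from B decompositions: {s,γ} = {s2,γ2} = {α,γ2}
          exfalso
          rcases pair_eq_iff.mp (hBd.symm.trans hBd2) with ⟨h5, h6⟩ | ⟨h5, h6⟩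
          · exact hsα (h5.trans h4.symm)
          · exact hαγ (h4.trans h6.symm)
      subst hs2
      have hα2 : α2 = α := by
        rcases pair_eq_iff.mp (hAd2.symm.trans hAd) with ⟨_, h4⟩ | ⟨h3, _⟩
        · exact h4
        · exact (hsα h3).elim
      have hγ2 : γ2 = γ := by
        rcases pair_eq_iff.mp (hBd2.symm.trans hBd) with ⟨_, h4⟩ | ⟨h3, _⟩
        · exact h4
        · exact (hsγ h3).elim
      subst hα2; subst hγ2
      exact ⟨t2, hA'd2, hB'd2, fun h => htα2 h.symm, fun h => htγ2 h.symm⟩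
  refine ⟨α, γ, fun y => if h : lo ≤ y ∧ y ≤ hi then (key y h.1 h.2).choose else α, hαγ, ?_⟩
  intro y h1 h2
  simp only [dif_pos (show lo ≤ y ∧ y ≤ hi from ⟨h1, h2⟩)]
  exact (key y h1 h2).choose_spec

end Ladder

section Grid
variable {V : Type*}

lemma nodup_of_pair {E : Multiset V} (h : ∃ u v, u ≠ v ∧ E = {u, v}) {c r : V}
    (hE : E = {c, r}) : c ≠ r := by
  obtain ⟨u, v, huv, rfl⟩ := h
  rcases pair_eq_iff.mp hE.symm with ⟨h1, h2⟩ | ⟨h1, h2⟩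
  · rw [← h1, ← h2] at huv; exact huv
  · rw [← h1, ← h2] at huv; exact fun h => huv h.symm

lemma grid_lemma {E : ℤ → ℤ → Multiset V} {x0 x1 y0 y1 : ℤ}
    (hx : x0 < x1) (hy : y0 < y1)
    (hedge : ∀ x y, x0 ≤ x → x ≤ x1 → y0 ≤ y → y ≤ y1 → ∃ u v, u ≠ v ∧ E x y = {u, v})
    (hinj : ∀ x y x' y', x0 ≤ x → x ≤ x1 → y0 ≤ y → y ≤ y1 →
        x0 ≤ x' → x' ≤ x1 → y0 ≤ y' → y' ≤ y1 → E x y = E x' y' → x = x' ∧ y = y')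
    (hrel : ∀ x x' y y', x0 ≤ x → x < x' → x' ≤ x1 → y0 ≤ y → y < y' → y' ≤ y1 →
        E x y + E x' y' = E x y' + E x' y) :
    ∃ (C R : ℤ → V), ∀ x y, x0 ≤ x → x ≤ x1 → y0 ≤ y → y ≤ y1 →
      E x y = {C x, R y} ∧ C x ≠ R y := by
  classical
  have hx1 : x0 ≤ x1 := le_of_lt hx
  have hy1 : y0 ≤ y1 := le_of_lt hy
  -- base ladder on columns x0, x1
  obtain ⟨α, γ, d, hαγ, hbase⟩ := ladder_lemma (V := V) (f := E x0) (g := E x1) hy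
    (fun y h1 h2 => ⟨hedge x0 y le_rfl hx1 h1 h2, hedge x1 y hx1 le_rfl h1 h2⟩)
    (fun y y' h1 h2 h3 h4 h => (hinj x0 y x0 y' le_rfl hx1 h1 h2 le_rfl hx1 h3 h4 h).2)
    (fun y y' h1 h2 h3 h4 h =>
      absurd (hinj x0 y x1 y' le_rfl hx1 h1 h2 hx1 le_rfl h3 h4 h).1 (by omega))
    (fun y y' h1 h2 h3 => hrel x0 x1 y y' le_rfl hx le_rfl h1 h2 h3)
  -- for every x in (x0, x1], column ladder on (x0, x)
  have key : ∀ x, x0 ≤ x → x ≤ x1 → ∃ cx, ∀ y, y0 ≤ y → y ≤ y1 →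
      E x y = {cx, d y} := by
    intro x hxl hxr
    rcases eq_or_lt_of_le hxl with rfl | hxlt
    · exact ⟨α, fun y h1 h2 => (hbase y h1 h2).1⟩
    · obtain ⟨αx, γx, dx, hαγx, hlx⟩ := ladder_lemma (V := V) (f := E x0) (g := E x) hy
        (fun y h1 h2 => ⟨hedge x0 y le_rfl hx1 h1 h2, hedge x y hxl hxr h1 h2⟩)
        (fun y y' h1 h2 h3 h4 h => (hinj x0 y x0 y' le_rfl hx1 h1 h2 le_rfl hx1 h3 h4 h).2)
        (fun y y' h1 h2 h3 h4 h =>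
          absurd (hinj x0 y x y' le_rfl hx1 h1 h2 hxl hxr h3 h4 h).1 (by omega))
        (fun y y' h1 h2 h3 => hrel x0 x y y' le_rfl hxlt hxr h1 h2 h3)
      -- reconcile: E x0 y = {α, d y} = {αx, dx y}
      have hαx : αx = α := by
        by_contra hne
        have hdy : ∀ y, y0 ≤ y → y ≤ y1 → d y = αx := by
          intro y h1 h2
          rcases pair_eq_iff.mp ((hlx y h1 h2).1.symm.trans (hbase y h1 h2).1) with
            ⟨h3, h4⟩ | ⟨h3, h4⟩
          · exact absurd h3 hne
          · exact h3.symm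
        have h5 : E x0 y0 = E x0 y1 := by
          rw [(hbase y0 le_rfl hy1).1, (hbase y1 hy1 le_rfl).1,
            hdy y0 le_rfl hy1, hdy y1 hy1 le_rfl]
        exact absurd ((hinj x0 y0 x0 y1 le_rfl hx1 le_rfl hy1 le_rfl hx1 hy1 le_rfl h5).2)
          (by omega)
      subst hαx
      have hdx : ∀ y, y0 ≤ y → y ≤ y1 → dx y = d y := by
        intro y h1 h2
        rcases pair_eq_iff.mp ((hlx y h1 h2).1.symm.trans (hbase y h1 h2).1) with
          ⟨h3, h4⟩ | ⟨h3, h4⟩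
        · exact h4
        · exact h4.trans h3
      exact ⟨γx, fun y h1 h2 => by rw [(hlx y h1 h2).2.1, hdx y h1 h2]⟩
  obtain ⟨C, hC⟩ : ∃ C : ℤ → V, ∀ x, x0 ≤ x → x ≤ x1 → ∀ y, y0 ≤ y → y ≤ y1 →
      E x y = {C x, d y} := by
    refine ⟨fun x => if h : x0 ≤ x ∧ x ≤ x1 then (key x h.1 h.2).choose else α, ?_⟩
    intro x h1 h2 y h3 h4
    simp only [dif_pos (show x0 ≤ x ∧ x ≤ x1 from ⟨h1, h2⟩)]
    exact (key x h1 h2).choose_spec y h3 h4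
  refine ⟨C, d, fun x y h1 h2 h3 h4 => ?_⟩
  have h5 := hC x h1 h2 y h3 h4
  exact ⟨h5, nodup_of_pair (hedge x y h1 h2 h3 h4) h5⟩

lemma overlap_lemma {E : ℤ → ℤ → Multiset V} {C R C' R' : ℤ → V} {x0 x1 y0 y1 : ℤ}
    (hx : x0 < x1) (hy : y0 < y1)
    (h1 : ∀ x y, x0 ≤ x → x ≤ x1 → y0 ≤ y → y ≤ y1 → E x y = {C x, R y} ∧ C x ≠ R y)
    (h2 : ∀ x y, x0 ≤ x → x ≤ x1 → y0 ≤ y → y ≤ y1 → E x y = {C' x, R' y} ∧ C' x ≠ R' y)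
    (hinj : ∀ x y x' y', x0 ≤ x → x ≤ x1 → y0 ≤ y → y ≤ y1 →
        x0 ≤ x' → x' ≤ x1 → y0 ≤ y' → y' ≤ y1 → E x y = E x' y' → x = x' ∧ y = y') :
    (∀ x, x0 ≤ x → x ≤ x1 → C x = C' x) ∧ (∀ y, y0 ≤ y → y ≤ y1 → R y = R' y) := by
  have hx1 : x0 ≤ x1 := le_of_lt hx
  have hy1 : y0 ≤ y1 := le_of_lt hy
  have hCeq : ∀ x, x0 ≤ x → x ≤ x1 → C x = C' x := by
    intro x ha hb
    by_contra hne
    have hR' : ∀ y, y0 ≤ y → y ≤ y1 → R' y = C x := by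
      intro y hc hd
      rcases pair_eq_iff.mp ((h1 x y ha hb hc hd).1.symm.trans (h2 x y ha hb hc hd).1) with
        ⟨h3, h4⟩ | ⟨h3, h4⟩
      · exact absurd h3 hne
      · exact h3.symm
    have h5 : E x y0 = E x y1 := by
      rw [(h2 x y0 ha hb le_rfl hy1).1, (h2 x y1 ha hb hy1 le_rfl).1,
        hR' y0 le_rfl hy1, hR' y1 hy1 le_rfl]
    exact absurd (hinj x y0 x y1 ha hb le_rfl hy1 ha hb hy1 le_rfl h5).2 (by omega)
  refine ⟨hCeq, fun y hc hd => ?_⟩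
  have h6 := ((h1 x0 y le_rfl hx1 hc hd).1.symm.trans (h2 x0 y le_rfl hx1 hc hd).1)
  rw [← hCeq x0 le_rfl hx1] at h6
  rcases pair_eq_iff.mp h6 with ⟨h3, h4⟩ | ⟨h3, h4⟩
  · exact h4
  · exact absurd h4.symm (h1 x0 y le_rfl hx1 hc hd).2

end Grid
end MSAux

section PolyAux

variable {K : Type} [Field K]

lemma span_coeff {σ : Type*} (S : Set (MvPolynomial σ K)) (μ : σ →₀ ℕ)
    (hS : ∀ g ∈ S, ∀ r : MvPolynomial σ K, coeff μ (r * g) = 0) :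
    ∀ h ∈ Ideal.span S, coeff μ h = 0 := by
  intro h hmem
  have hJ : Ideal.span S ≤
      { carrier := {x : MvPolynomial σ K | ∀ r : MvPolynomial σ K, coeff μ (r * x) = 0},
        add_mem' := fun hx hy r => by
          rw [mul_add, coeff_add, hx r, hy r, add_zero]
        zero_mem' := fun r => by rw [mul_zero, coeff_zero]
        smul_mem' := fun c x hx r => by
          rw [smul_eq_mul, ← mul_assoc]; exact hx (r * c) } :=
    Ideal.span_le.mpr hS
  simpa using hJ hmem 1

/-- A `Sym2` as a multiset. -/
def toM {VG : Type*} : Sym2 VG → Multiset VG :=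
  Sym2.lift ⟨fun u w => {u, w}, fun u w => pair_comm' u w⟩

lemma toM_mk {VG : Type*} (u w : VG) : toM s(u, w) = {u, w} := rfl

lemma toM_edge {VG : Type*} (G : SimpleGraph VG) (e : Sym2 VG) (he : e ∈ G.edgeSet) :
    ∃ u v, u ≠ v ∧ toM e = {u, v} := by
  induction e using Sym2.inductionOn with
  | hf u v =>
      exact ⟨u, v, G.ne_of_adj ((SimpleGraph.mem_edgeSet G).mp he), rfl⟩

lemma toM_inj {VG : Type*} : Function.Injective (toM (VG := VG)) := by
  intro e e' h
  induction e using Sym2.inductionOn with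
  | hf u v =>
    induction e' using Sym2.inductionOn with
    | hf u' v' =>
      rw [toM_mk, toM_mk] at h
      rcases pair_eq_iff.mp h with ⟨rfl, rfl⟩ | ⟨rfl, rfl⟩
      · rfl
      · exact Sym2.eq_swap

lemma X_mul_X' {σ : Type*} [DecidableEq σ] (u w : σ) :
    (X u * X w : MvPolynomial σ K) = monomial (Multiset.toFinsupp {u, w}) 1 := by
  have h : ({u, w} : Multiset σ) = {u} + {w} := (Multiset.singleton_add u {w}).symm
  rw [h, map_add, Multiset.toFinsupp_singleton, Multiset.toFinsupp_singleton]
  rw [X, X, monomial_mul, one_mul]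

lemma edgeMonomial_toM {VG : Type} [DecidableEq VG] (e : Sym2 VG) :
    edgeMonomial K e = monomial (Multiset.toFinsupp (toM e)) (1 : K) := by
  induction e using Sym2.inductionOn with
  | hf u v =>
      rw [toM_mk, ← X_mul_X']
      rfl

end PolyAux

theorem stmt5 (K : Type) [Field K] (a b : Cell) (hab1 : a.1 < b.1) (hab2 : a.2 < b.2)
    (P : Finset Cell) (hP : IsPolyomino P) (hsimple : IsSimple P)
    (hsub : P ⊆ rectCells a b)
    (hinterior : ∀ c ∈ P, a.1 < c.1 ∧ c.1 + 1 < b.1 ∧ a.2 < c.2 ∧ c.2 + 1 < b.2) :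
    ¬ ∃ (VG : Type) (_ : Fintype VG) (G : SimpleGraph VG)
        (ε : Vtx (rectCells a b \ P) ≃ G.edgeSet),
        polyoIdeal K (rectCells a b \ P) =
          RingHom.ker (MvPolynomial.aeval
            (fun v : Vtx (rectCells a b \ P) =>
              edgeMonomial K ((ε v : G.edgeSet) : Sym2 VG)) :
            polyRing K (rectCells a b \ P) →ₐ[K] MvPolynomial VG K).toRingHom := by
  classical
  set Q : Finset Cell := rectCells a b \ P with hQdef
  rintro ⟨VG, _inst, G, ε, hEq⟩
  -- hole bounding box
  obtain ⟨c00, hc00⟩ := hP.1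
  have hne1 : (P.image Prod.fst).Nonempty := ⟨c00.1, Finset.mem_image_of_mem _ hc00⟩
  have hne2 : (P.image Prod.snd).Nonempty := ⟨c00.2, Finset.mem_image_of_mem _ hc00⟩
  set p : ℤ := (P.image Prod.fst).min' hne1 with hpdef
  set p' : ℤ := (P.image Prod.fst).max' hne1 with hp'def
  set q : ℤ := (P.image Prod.snd).min' hne2 with hqdef
  set q' : ℤ := (P.image Prod.snd).max' hne2 with hq'def
  have hpc : ∀ c ∈ P, p ≤ c.1 ∧ c.1 ≤ p' ∧ q ≤ c.2 ∧ c.2 ≤ q' :=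
    fun c hc => ⟨Finset.min'_le _ _ (Finset.mem_image_of_mem _ hc),
      Finset.le_max' _ _ (Finset.mem_image_of_mem _ hc),
      Finset.min'_le _ _ (Finset.mem_image_of_mem _ hc),
      Finset.le_max' _ _ (Finset.mem_image_of_mem _ hc)⟩
  have hbnd : a.1 + 1 ≤ p ∧ p ≤ p' ∧ p' + 2 ≤ b.1 ∧ a.2 + 1 ≤ q ∧ q ≤ q' ∧ q' + 2 ≤ b.2 := by
    obtain ⟨cp, hcpm, hcp⟩ := Finset.mem_image.mp (Finset.min'_mem _ hne1)
    obtain ⟨cp', hcp'm, hcp'⟩ := Finset.mem_image.mp (Finset.max'_mem _ hne1)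
    obtain ⟨cq, hcqm, hcq⟩ := Finset.mem_image.mp (Finset.min'_mem _ hne2)
    obtain ⟨cq', hcq'm, hcq'⟩ := Finset.mem_image.mp (Finset.max'_mem _ hne2)
    have h1 := hinterior cp hcpm
    have h2 := hinterior cp' hcp'm
    have h3 := hinterior cq hcqm
    have h4 := hinterior cq' hcq'm
    have h5 := hpc cp hcpm
    have h6 := hpc cq hcqm
    omega
  obtain ⟨hb1, hb2, hb3, hb4, hb5, hb6⟩ := hbnd
  -- cells of Q
  have cellQ : ∀ c : Cell, a.1 ≤ c.1 → c.1 + 1 ≤ b.1 → a.2 ≤ c.2 → c.2 + 1 ≤ b.2 →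
      c ∉ P → c ∈ Q := by
    intro c h1 h2 h3 h4 h5
    rw [hQdef, Finset.mem_sdiff]
    refine ⟨?_, h5⟩
    rw [rectCells, Finset.mem_filter, Finset.mem_Icc]
    exact ⟨⟨⟨h1, h3⟩, ⟨by omega, by omega⟩⟩, h2, h4⟩
  -- vertices of Q
  have vtxQ : ∀ x y cx cy : ℤ, (cx = x ∨ cx = x - 1) → (cy = y ∨ cy = y - 1) →
      a.1 ≤ cx → cx + 1 ≤ b.1 → a.2 ≤ cy → cy + 1 ≤ b.2 → ((cx, cy) : Cell) ∉ P →
      ((x, y) : ℤ × ℤ) ∈ vertexSet Q := by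
    intro x y cx cy h1 h2 h3 h4 h5 h6 h7
    have hcell : ((cx, cy) : Cell) ∈ Q := cellQ _ h3 h4 h5 h6 h7
    refine Set.mem_iUnion₂.mpr ⟨(cx, cy), hcell, ?_⟩
    simp only [cellVertices, Set.mem_insert_iff, Set.mem_singleton_iff, Prod.mk.injEq]
    omega
  have bottomV : ∀ x y : ℤ, a.1 ≤ x → x ≤ b.1 → a.2 ≤ y → y ≤ q →
      ((x, y) : ℤ × ℤ) ∈ vertexSet Q := by
    intro x y h1 h2 h3 h4
    refine vtxQ x y (if x = b.1 then x - 1 else x) (if y = a.2 then y else y - 1)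
      (by split_ifs <;> omega) (by split_ifs <;> omega)
      (by split_ifs <;> omega) (by split_ifs <;> omega)
      (by split_ifs <;> omega) (by split_ifs <;> omega) ?_
    intro hmem
    have h8 := (hpc _ hmem).2.2.1
    simp only at h8
    split_ifs at h8 <;> omega
  have topV : ∀ x y : ℤ, a.1 ≤ x → x ≤ b.1 → q' + 1 ≤ y → y ≤ b.2 →
      ((x, y) : ℤ × ℤ) ∈ vertexSet Q := by
    intro x y h1 h2 h3 h4
    refine vtxQ x y (if x = b.1 then x - 1 else x) (if y = b.2 then y - 1 else y)
      (by split_ifs <;> omega) (by split_ifs <;> omega)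
      (by split_ifs <;> omega) (by split_ifs <;> omega)
      (by split_ifs <;> omega) (by split_ifs <;> omega) ?_
    intro hmem
    have h8 := (hpc _ hmem).2.2.2
    simp only at h8
    split_ifs at h8 <;> omega
  have leftV : ∀ x y : ℤ, a.1 ≤ x → x ≤ p → a.2 ≤ y → y ≤ b.2 →
      ((x, y) : ℤ × ℤ) ∈ vertexSet Q := by
    intro x y h1 h2 h3 h4
    refine vtxQ x y (if x = p then x - 1 else x) (if y = b.2 then y - 1 else y)
      (by split_ifs <;> omega) (by split_ifs <;> omega)
      (by split_ifs <;> omega) (by split_ifs <;> omega)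
      (by split_ifs <;> omega) (by split_ifs <;> omega) ?_
    intro hmem
    have h8 := (hpc _ hmem).1
    simp only at h8
    split_ifs at h8 <;> omega
  have rightV : ∀ x y : ℤ, p' + 1 ≤ x → x ≤ b.1 → a.2 ≤ y → y ≤ b.2 →
      ((x, y) : ℤ × ℤ) ∈ vertexSet Q := by
    intro x y h1 h2 h3 h4
    refine vtxQ x y (if x = b.1 then x - 1 else x) (if y = b.2 then y - 1 else y)
      (by split_ifs <;> omega) (by split_ifs <;> omega)
      (by split_ifs <;> omega) (by split_ifs <;> omega)
      (by split_ifs <;> omega) (by split_ifs <;> omega) ?_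
    intro hmem
    have h8 := (hpc _ hmem).2.1
    simp only at h8
    split_ifs at h8 <;> omega
  -- inner boxes in the four slabs
  have boxgen : ∀ x x' y y' : ℤ, a.1 ≤ x → x < x' → x' ≤ b.1 → a.2 ≤ y → y < y' → y' ≤ b.2 →
      (∀ c : Cell, x ≤ c.1 → c.1 + 1 ≤ x' → y ≤ c.2 → c.2 + 1 ≤ y' → c ∉ P) →
      IsInnerInterval Q (x, y) (x', y') := by
    intro x x' y y' h1 h2 h3 h4 h5 h6 h7
    refine ⟨h2, h5, ?_⟩
    intro c hc
    obtain ⟨h8, h9, h10⟩ := hc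
    rw [Prod.le_def] at h8
    obtain ⟨h8a, h8b⟩ := h8
    simp only at h8a h8b h9 h10
    exact cellQ c (by omega) (by omega) (by omega) (by omega) (h7 c h8a h9 h8b h10)
  have bottomBox : ∀ x x' y y' : ℤ, a.1 ≤ x → x < x' → x' ≤ b.1 → a.2 ≤ y → y < y' → y' ≤ q →
      IsInnerInterval Q (x, y) (x', y') := by
    intro x x' y y' h1 h2 h3 h4 h5 h6
    refine boxgen x x' y y' h1 h2 h3 h4 h5 (by omega) ?_
    intro c hc1 hc2 hc3 hc4 hmem
    have := (hpc _ hmem).2.2.1; omega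
  have topBox : ∀ x x' y y' : ℤ, a.1 ≤ x → x < x' → x' ≤ b.1 → q' + 1 ≤ y → y < y' → y' ≤ b.2 →
      IsInnerInterval Q (x, y) (x', y') := by
    intro x x' y y' h1 h2 h3 h4 h5 h6
    refine boxgen x x' y y' h1 h2 h3 (by omega) h5 h6 ?_
    intro c hc1 hc2 hc3 hc4 hmem
    have := (hpc _ hmem).2.2.2; omega
  have leftBox : ∀ x x' y y' : ℤ, a.1 ≤ x → x < x' → x' ≤ p → a.2 ≤ y → y < y' → y' ≤ b.2 →
      IsInnerInterval Q (x, y) (x', y') := by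
    intro x x' y y' h1 h2 h3 h4 h5 h6
    refine boxgen x x' y y' h1 h2 (by omega) h4 h5 h6 ?_
    intro c hc1 hc2 hc3 hc4 hmem
    have := (hpc _ hmem).1; omega
  have rightBox : ∀ x x' y y' : ℤ, p' + 1 ≤ x → x < x' → x' ≤ b.1 → a.2 ≤ y → y < y' → y' ≤ b.2 →
      IsInnerInterval Q (x, y) (x', y') := by
    intro x x' y y' h1 h2 h3 h4 h5 h6
    refine boxgen x x' y y' (by omega) h2 h3 h4 h5 h6 ?_
    intro c hc1 hc2 hc3 hc4 hmem
    have := (hpc _ hmem).2.1; omega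
  -- the multiset-valued edge function
  obtain ⟨EV, hEV⟩ : ∃ EV : ℤ → ℤ → Multiset VG, ∀ x y : ℤ,
      ∀ h : ((x, y) : ℤ × ℤ) ∈ vertexSet Q,
      EV x y = toM ((ε ⟨(x, y), h⟩ : G.edgeSet) : Sym2 VG) :=
    ⟨fun x y => if h : ((x, y) : ℤ × ℤ) ∈ vertexSet Q then
      toM ((ε ⟨(x, y), h⟩ : G.edgeSet) : Sym2 VG) else 0,
     fun x y h => dif_pos h⟩
  have hEdgeEV : ∀ x y : ℤ, ((x, y) : ℤ × ℤ) ∈ vertexSet Q →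
      ∃ u w, u ≠ w ∧ EV x y = {u, w} := by
    intro x y h
    rw [hEV x y h]
    exact toM_edge G _ (ε ⟨(x, y), h⟩).2
  have hinjEV : ∀ x y x' y' : ℤ, ((x, y) : ℤ × ℤ) ∈ vertexSet Q →
      ((x', y') : ℤ × ℤ) ∈ vertexSet Q → EV x y = EV x' y' → x = x' ∧ y = y' := by
    intro x y x' y' h h' heq
    rw [hEV x y h, hEV x' y' h'] at heq
    have h2 := ε.injective (Subtype.ext (toM_inj heq))
    have h3 := congrArg Subtype.val h2
    simp only [Prod.mk.injEq] at h3
    exact h3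
  -- relations from inner intervals
  have relEV : ∀ x x' y y' : ℤ,
      ∀ h1 : ((x, y) : ℤ × ℤ) ∈ vertexSet Q, ∀ h2 : ((x', y') : ℤ × ℤ) ∈ vertexSet Q,
      ∀ h3 : ((x, y') : ℤ × ℤ) ∈ vertexSet Q, ∀ h4 : ((x', y) : ℤ × ℤ) ∈ vertexSet Q,
      IsInnerInterval Q (x, y) (x', y') →
      EV x y + EV x' y' = EV x y' + EV x' y := by
    intro x x' y y' h1 h2 h3 h4 hI
    have hgen : (X ⟨((x, y) : ℤ × ℤ), h1⟩ * X ⟨((x', y') : ℤ × ℤ), h2⟩ -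
        X ⟨((x, y') : ℤ × ℤ), h3⟩ * X ⟨((x', y) : ℤ × ℤ), h4⟩ : polyRing K Q) ∈
        polyoIdeal K Q := by
      apply Ideal.subset_span
      exact ⟨(x, y), (x', y'), h1, h2, h3, h4, hI, rfl⟩
    rw [hEq, RingHom.mem_ker] at hgen
    simp only [AlgHom.toRingHom_eq_coe, RingHom.coe_coe, map_sub, map_mul, aeval_X] at hgen
    rw [sub_eq_zero] at hgen
    rw [edgeMonomial_toM, edgeMonomial_toM, edgeMonomial_toM, edgeMonomial_toM,
      monomial_mul, monomial_mul, one_mul, ← map_add, ← map_add] at hgen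
    have h5 := Multiset.toFinsupp.injective
      (monomial_left_injective (one_ne_zero : (1 : K) ≠ 0) hgen)
    rw [hEV x y h1, hEV x' y' h2, hEV x y' h3, hEV x' y h4]
    exact h5
  -- the four slab grids
  obtain ⟨Cb, Rb, hbot⟩ := grid_lemma (E := EV) hab1 (show a.2 < q by omega)
    (fun x y h1 h2 h3 h4 => hEdgeEV x y (bottomV x y h1 h2 h3 h4))
    (fun x y x' y' h1 h2 h3 h4 h5 h6 h7 h8 h =>
      hinjEV x y x' y' (bottomV x y h1 h2 h3 h4) (bottomV x' y' h5 h6 h7 h8) h)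
    (fun x x' y y' h1 h2 h3 h4 h5 h6 =>
      relEV x x' y y' (bottomV x y h1 (by omega) h4 (by omega))
        (bottomV x' y' (by omega) h3 (by omega) h6)
        (bottomV x y' h1 (by omega) (by omega) h6)
        (bottomV x' y (by omega) h3 h4 (by omega))
        (bottomBox x x' y y' h1 h2 h3 h4 h5 h6))
  obtain ⟨Ct, Rt, htop⟩ := grid_lemma (E := EV) hab1 (show q' + 1 < b.2 by omega)
    (fun x y h1 h2 h3 h4 => hEdgeEV x y (topV x y h1 h2 h3 h4))
    (fun x y x' y' h1 h2 h3 h4 h5 h6 h7 h8 h =>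
      hinjEV x y x' y' (topV x y h1 h2 h3 h4) (topV x' y' h5 h6 h7 h8) h)
    (fun x x' y y' h1 h2 h3 h4 h5 h6 =>
      relEV x x' y y' (topV x y h1 (by omega) h4 (by omega))
        (topV x' y' (by omega) h3 (by omega) h6)
        (topV x y' h1 (by omega) (by omega) h6)
        (topV x' y (by omega) h3 h4 (by omega))
        (topBox x x' y y' h1 h2 h3 h4 h5 h6))
  obtain ⟨Cl, Rl, hleft⟩ := grid_lemma (E := EV) (show a.1 < p by omega) hab2
    (fun x y h1 h2 h3 h4 => hEdgeEV x y (leftV x y h1 h2 h3 h4))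
    (fun x y x' y' h1 h2 h3 h4 h5 h6 h7 h8 h =>
      hinjEV x y x' y' (leftV x y h1 h2 h3 h4) (leftV x' y' h5 h6 h7 h8) h)
    (fun x x' y y' h1 h2 h3 h4 h5 h6 =>
      relEV x x' y y' (leftV x y h1 (by omega) h4 (by omega))
        (leftV x' y' (by omega) h3 (by omega) h6)
        (leftV x y' h1 (by omega) (by omega) h6)
        (leftV x' y (by omega) h3 h4 (by omega))
        (leftBox x x' y y' h1 h2 h3 h4 h5 h6))
  obtain ⟨Cr, Rr, hright⟩ := grid_lemma (E := EV) (show p' + 1 < b.1 by omega) hab2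
    (fun x y h1 h2 h3 h4 => hEdgeEV x y (rightV x y h1 h2 h3 h4))
    (fun x y x' y' h1 h2 h3 h4 h5 h6 h7 h8 h =>
      hinjEV x y x' y' (rightV x y h1 h2 h3 h4) (rightV x' y' h5 h6 h7 h8) h)
    (fun x x' y y' h1 h2 h3 h4 h5 h6 =>
      relEV x x' y y' (rightV x y h1 (by omega) h4 (by omega))
        (rightV x' y' (by omega) h3 (by omega) h6)
        (rightV x y' h1 (by omega) (by omega) h6)
        (rightV x' y (by omega) h3 h4 (by omega))
        (rightBox x x' y y' h1 h2 h3 h4 h5 h6))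
  -- overlaps
  have hbl := overlap_lemma (E := EV) (show a.1 < p by omega) (show a.2 < q by omega)
    (fun x y h1 h2 h3 h4 => hbot x y h1 (by omega) h3 h4)
    (fun x y h1 h2 h3 h4 => hleft x y h1 h2 h3 (by omega))
    (fun x y x' y' h1 h2 h3 h4 h5 h6 h7 h8 h =>
      hinjEV x y x' y' (bottomV x y h1 (by omega) h3 h4)
        (bottomV x' y' h5 (by omega) h7 h8) h)
  have hbr := overlap_lemma (E := EV) (show p' + 1 < b.1 by omega) (show a.2 < q by omega)
    (fun x y h1 h2 h3 h4 => hbot x y (by omega) h2 h3 h4)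
    (fun x y h1 h2 h3 h4 => hright x y h1 h2 h3 (by omega))
    (fun x y x' y' h1 h2 h3 h4 h5 h6 h7 h8 h =>
      hinjEV x y x' y' (bottomV x y (by omega) h2 h3 h4)
        (bottomV x' y' (by omega) h6 h7 h8) h)
  have hlt := overlap_lemma (E := EV) (show a.1 < p by omega) (show q' + 1 < b.2 by omega)
    (fun x y h1 h2 h3 h4 => hleft x y h1 h2 (by omega) h4)
    (fun x y h1 h2 h3 h4 => htop x y h1 (by omega) h3 h4)
    (fun x y x' y' h1 h2 h3 h4 h5 h6 h7 h8 h =>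
      hinjEV x y x' y' (leftV x y h1 h2 (by omega) h4)
        (leftV x' y' h5 h6 (by omega) h8) h)
  have hrt := overlap_lemma (E := EV) (show p' + 1 < b.1 by omega) (show q' + 1 < b.2 by omega)
    (fun x y h1 h2 h3 h4 => hright x y h1 h2 (by omega) h4)
    (fun x y h1 h2 h3 h4 => htop x y (by omega) h2 h3 h4)
    (fun x y x' y' h1 h2 h3 h4 h5 h6 h7 h8 h =>
      hinjEV x y x' y' (rightV x y h1 h2 (by omega) h4)
        (rightV x' y' h5 h6 (by omega) h8) h)
  -- corner vertex memberships
  have hv00 : ((p, q) : ℤ × ℤ) ∈ vertexSet Q :=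
    bottomV p q (by omega) (by omega) (by omega) le_rfl
  have hv11 : ((p' + 1, q' + 1) : ℤ × ℤ) ∈ vertexSet Q :=
    rightV (p' + 1) (q' + 1) le_rfl (by omega) (by omega) (by omega)
  have hv01 : ((p, q' + 1) : ℤ × ℤ) ∈ vertexSet Q :=
    leftV p (q' + 1) (by omega) le_rfl (by omega) (by omega)
  have hv10 : ((p' + 1, q) : ℤ × ℤ) ∈ vertexSet Q :=
    rightV (p' + 1) q le_rfl (by omega) (by omega) (by omega)
  -- the key multiset identity around the hole
  have hms : EV p q + EV (p' + 1) (q' + 1) = EV p (q' + 1) + EV (p' + 1) q := by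
    rw [(hbot p q (by omega) (by omega) (by omega) le_rfl).1,
      (hright (p' + 1) (q' + 1) le_rfl (by omega) (by omega) (by omega)).1,
      (hleft p (q' + 1) (by omega) le_rfl (by omega) (by omega)).1,
      (hright (p' + 1) q le_rfl (by omega) (by omega) (by omega)).1]
    have e1 : Cl p = Cb p := (hbl.1 p (by omega) le_rfl).symm
    have e2 : Rr q = Rb q := (hbr.2 q (by omega) le_rfl).symm
    have e3 : Rl (q' + 1) = Rr (q' + 1) :=
      (hlt.2 (q' + 1) le_rfl (by omega)).trans (hrt.2 (q' + 1) le_rfl (by omega)).symm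
    rw [e1, e2, e3]
    exact quad_shuffle _ _ _ _
  have hmsE : toM ((ε ⟨((p, q) : ℤ × ℤ), hv00⟩ : G.edgeSet) : Sym2 VG) +
      toM ((ε ⟨((p' + 1, q' + 1) : ℤ × ℤ), hv11⟩ : G.edgeSet) : Sym2 VG) =
      toM ((ε ⟨((p, q' + 1) : ℤ × ℤ), hv01⟩ : G.edgeSet) : Sym2 VG) +
      toM ((ε ⟨((p' + 1, q) : ℤ × ℤ), hv10⟩ : G.edgeSet) : Sym2 VG) := by
    rw [← hEV _ _ hv00, ← hEV _ _ hv11, ← hEV _ _ hv01, ← hEV _ _ hv10]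
    exact hms
  -- the binomial lies in the kernel, hence in the polyomino ideal
  have hker : (X ⟨((p, q) : ℤ × ℤ), hv00⟩ * X ⟨((p' + 1, q' + 1) : ℤ × ℤ), hv11⟩ -
      X ⟨((p, q' + 1) : ℤ × ℤ), hv01⟩ * X ⟨((p' + 1, q) : ℤ × ℤ), hv10⟩ : polyRing K Q) ∈
      polyoIdeal K Q := by
    rw [hEq, RingHom.mem_ker]
    simp only [AlgHom.toRingHom_eq_coe, RingHom.coe_coe, map_sub, map_mul, aeval_X]
    rw [edgeMonomial_toM, edgeMonomial_toM, edgeMonomial_toM, edgeMonomial_toM,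
      monomial_mul, monomial_mul, one_mul, ← map_add, ← map_add, hmsE, sub_self]
  -- the coefficient functional kills the ideal at the exponent μ0
  have hne00 : (⟨((p, q) : ℤ × ℤ), hv00⟩ : Vtx Q) ≠ ⟨((p' + 1, q' + 1) : ℤ × ℤ), hv11⟩ := by
    intro h
    have := congrArg Subtype.val h
    simp only [Prod.mk.injEq] at this
    omega
  have pairLe : ∀ (v w u z : Vtx Q),
      Multiset.toFinsupp ({v, w} : Multiset (Vtx Q)) ≤
        Multiset.toFinsupp ({u, z} : Multiset (Vtx Q)) →
      ({v, w} : Multiset (Vtx Q)) = {u, z} := by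
    intro v w u z hle
    have hle2 : ({v, w} : Multiset (Vtx Q)) ≤ {u, z} := by
      rw [Multiset.le_iff_count]
      intro x
      have := Finsupp.le_def.mp hle x
      simpa using this
    exact Multiset.eq_of_le_of_card_le hle2 (by rfl)
  have hvan : ∀ h ∈ polyoIdeal K Q, coeff
      (Multiset.toFinsupp ({⟨((p, q) : ℤ × ℤ), hv00⟩,
        ⟨((p' + 1, q' + 1) : ℤ × ℤ), hv11⟩} : Multiset (Vtx Q))) h = 0 := by
    refine span_coeff _ _ ?_
    rintro g ⟨A, B, hA, hB, hcv, hdv, hI, rfl⟩ r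
    obtain ⟨A1, A2⟩ := A
    obtain ⟨B1, B2⟩ := B
    rw [mul_sub, coeff_sub, X_mul_X', X_mul_X', coeff_mul_monomial', coeff_mul_monomial']
    rw [if_neg ?_, if_neg ?_, sub_zero]
    · -- anti-diagonal monomial
      intro hle
      have h6 := pairLe _ _ _ _ hle
      rcases pair_eq_iff.mp h6 with ⟨h7, h8⟩ | ⟨h7, h8⟩ <;>
      · have h7' := congrArg Subtype.val h7
        have h8' := congrArg Subtype.val h8
        simp only [Prod.mk.injEq] at h7' h8'
        have h9 := hI.1
        have h10 := hI.2.1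
        simp only at h9 h10
        omega
    · -- diagonal monomial
      intro hle
      have h6 := pairLe _ _ _ _ hle
      rcases pair_eq_iff.mp h6 with ⟨h7, h8⟩ | ⟨h7, h8⟩
      · have h7' := congrArg Subtype.val h7
        have h8' := congrArg Subtype.val h8
        simp only [Prod.mk.injEq] at h7' h8'
        have hbox : CellInBox (A1, A2) (B1, B2) c00 := by
          refine ⟨Prod.le_def.mpr ⟨?_, ?_⟩, ?_, ?_⟩ <;>
          · have := hpc c00 hc00
            omega
        have h9 := hI.2.2 c00 hbox
        rw [hQdef, Finset.mem_sdiff] at h9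
        exact h9.2 hc00
      · have h7' := congrArg Subtype.val h7
        have h8' := congrArg Subtype.val h8
        simp only [Prod.mk.injEq] at h7' h8'
        have h9 := hI.1
        simp only at h9
        omega
  -- but the coefficient of the binomial at μ0 is 1
  have hcoeff : coeff
      (Multiset.toFinsupp ({⟨((p, q) : ℤ × ℤ), hv00⟩,
        ⟨((p' + 1, q' + 1) : ℤ × ℤ), hv11⟩} : Multiset (Vtx Q)))
      (X ⟨((p, q) : ℤ × ℤ), hv00⟩ * X ⟨((p' + 1, q' + 1) : ℤ × ℤ), hv11⟩ -
        X ⟨((p, q' + 1) : ℤ × ℤ), hv01⟩ * X ⟨((p' + 1, q) : ℤ × ℤ), hv10⟩ : polyRing K Q) =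
      1 := by
    rw [coeff_sub, X_mul_X', X_mul_X', coeff_monomial, coeff_monomial, if_pos rfl, if_neg ?_]
    · ring
    · intro h
      have h6 := Multiset.toFinsupp.injective h
      rcases pair_eq_iff.mp h6 with ⟨h7, h8⟩ | ⟨h7, h8⟩ <;>
      · have h7' := congrArg Subtype.val h7
        have h8' := congrArg Subtype.val h8
        simp only [Prod.mk.injEq] at h7' h8'
        omega
  have := hvan _ hker
  rw [hcoeff] at this
  exact one_ne_zero this





end PolyoStmt
end

section
/- Let K be a field and let P be a polyomino admitting a zig-zag walk W: I₁,…,I_ℓ with vertices v_i, z_i, u_i as in the definition of zig-zag walk, and set f_W = Π_{k=1}^{ℓ} x_{z_k} − Π_{k=1}^{ℓ} x_{u_k} ∈ S_P. Then x_{v_i}·f_W ∈ I_P for every i = 1,…,ℓ, while f_W ∉ I_P and x_{v_i} ∉ I_P for every i; in particular, the residue classes of f_W and of each x_{v_i} are nonzero zero divisors in K[P]. -/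
open MvPolynomial

namespace PolyoStmt

theorem prodidx {M : ℕ} [NeZero M] {R : Type} [CommRing R] (i : ZMod M) (f : ZMod M → R) :
    ∏ k, f k = ∏ t ∈ Finset.range M, f (i + (t : ZMod M)) := by
  have h1 : ∏ k : ZMod M, f (i + k) = ∏ k : ZMod M, f k :=
    Equiv.prod_comp (Equiv.addLeft i) f
  rw [← h1]
  apply Finset.prod_nbij' (fun k => ZMod.val k) (fun t => ((t : ℕ) : ZMod M))
  · intro a _; exact Finset.mem_range.mpr (ZMod.val_lt a)
  · intro b _; exact Finset.mem_univ _
  · intro a _; exact ZMod.natCast_rightInverse a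
  · intro b hb; exact ZMod.val_cast_of_lt (Finset.mem_range.mp hb)
  · intro a _; rw [ZMod.natCast_rightInverse a]

theorem cyc {m : ℕ} {R : Type} [CommRing R] (Z U V : ZMod (m+2) → R)
    (h : ∀ k, V k * Z k = U k * V (k+1)) (i : ZMod (m+2)) :
    V i * ∏ k, Z k = (∏ k, U k) * V i := by
  have step : ∀ s : ℕ, s ≤ m + 2 →
      V i * ∏ t ∈ Finset.range (m+2), Z (i + (t : ZMod (m+2))) =
        (∏ t ∈ Finset.range s, U (i + (t : ZMod (m+2)))) *
          (V (i + (s : ZMod (m+2))) * ∏ t ∈ Finset.Ico s (m+2), Z (i + (t : ZMod (m+2)))) := by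
    intro s
    induction s with
    | zero => intro _; simp only [Finset.range_zero, Finset.prod_empty, one_mul, Nat.cast_zero, add_zero, Finset.range_eq_Ico, Finset.Ico_self]
    | succ s ih =>
      intro hs
      have hs' : s ≤ m + 2 := Nat.le_of_succ_le hs
      have hlt : s < m + 2 := hs
      rw [ih hs', Finset.prod_eq_prod_Ico_succ_bot hlt, Finset.prod_range_succ]
      have hc : ((s+1 : ℕ) : ZMod (m+2)) = (s : ZMod (m+2)) + 1 := by push_cast; ring
      rw [hc, ← add_assoc, ← mul_assoc (V (i + (s:ZMod (m+2)))), h (i + (s : ZMod (m+2)))]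
      ring
  have final := step (m+2) le_rfl
  rw [prodidx i Z, prodidx i U, final]
  simp [ZMod.natCast_self]

theorem prodX {ι σ K : Type} [Field K] (s : Finset ι) (f : ι → σ) :
    ∏ k ∈ s, (X (f k) : MvPolynomial σ K) =
      monomial (∑ k ∈ s, Finsupp.single (f k) 1) 1 := by
  classical
  induction s using Finset.induction_on with
  | empty => simp
  | insert _ _ hns ih =>
    rw [Finset.prod_insert hns, Finset.sum_insert hns, ih]
    rw [show (X (f _) : MvPolynomial σ K) = monomial (Finsupp.single (f _) 1) 1 from rfl,
      monomial_mul, one_mul]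

theorem coeff_span {σ K : Type} [Field K] (S : Set (MvPolynomial σ K)) (m : σ →₀ ℕ)
    (H : ∀ g ∈ S, ∀ h : MvPolynomial σ K, coeff m (h * g) = 0) :
    ∀ f ∈ Ideal.span S, coeff m f = 0 := by
  intro f hf
  have key : ∀ h : MvPolynomial σ K, coeff m (h * f) = 0 := by
    refine Submodule.span_induction (p := fun x _ => ∀ h : MvPolynomial σ K, coeff m (h * x) = 0)
      ?_ ?_ ?_ ?_ hf
    · exact H
    · intro h; simp
    · intro x y _ _ hx hy h; rw [mul_add, coeff_add, hx, hy, add_zero]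
    · intro a x _ hx h
      rw [smul_eq_mul, show h * (a * x) = (h * a) * x by ring, hx]
  simpa using key 1

theorem gen_coeff {σ K : Type} [Field K] (m sa sb : σ →₀ ℕ)
    (ha : ¬ sa ≤ m) (hb : ¬ sb ≤ m) (h : MvPolynomial σ K) :
    coeff m (h * (monomial sa 1 - monomial sb 1)) = 0 := by
  rw [mul_sub, coeff_sub, coeff_mul_monomial', coeff_mul_monomial', if_neg ha, if_neg hb, sub_zero]

theorem XX {σ K : Type} [Field K] (a b : σ) :
    (X a * X b : MvPolynomial σ K) =
      monomial (Finsupp.single a 1 + Finsupp.single b 1) 1 := by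
  rw [show (X a : MvPolynomial σ K) = monomial (Finsupp.single a 1) 1 from rfl,
    show (X b : MvPolynomial σ K) = monomial (Finsupp.single b 1) 1 from rfl,
    monomial_mul, one_mul]

section ZZW
open Finset
variable {P : Finset Cell} (W : ZigZagWalk P)

lemma lo_le_hi (i : ZMod (W.n + 2)) : W.lo i ≤ W.hi i := by
  obtain ⟨h1, h2, -⟩ := W.inner i
  exact ⟨le_of_lt h1, le_of_lt h2⟩

lemma corners_mem_Icc (i : ZMod (W.n + 2)) :
    W.lo i ∈ Set.Icc (W.lo i) (W.hi i) ∧ W.hi i ∈ Set.Icc (W.lo i) (W.hi i) ∧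
    ((W.lo i).1, (W.hi i).2) ∈ Set.Icc (W.lo i) (W.hi i) ∧
    ((W.hi i).1, (W.lo i).2) ∈ Set.Icc (W.lo i) (W.hi i) := by
  obtain ⟨h1, h2⟩ := lo_le_hi W i
  refine ⟨⟨le_rfl, lo_le_hi W i⟩, ⟨lo_le_hi W i, le_rfl⟩, ⟨⟨le_rfl, h2⟩, ⟨h1, le_rfl⟩⟩,
    ⟨⟨h1, le_rfl⟩, ⟨le_rfl, h2⟩⟩⟩

/-- The four corner positions possible for `z i`. -/
lemma z_mem_Icc (i : ZMod (W.n + 2)) : W.z i ∈ Set.Icc (W.lo i) (W.hi i) := by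
  obtain ⟨m1, m2, m3, m4⟩ := corners_mem_Icc W i
  rcases W.corners i with ⟨h, -⟩ | ⟨h, -⟩ <;>
    rcases Set.pair_eq_pair_iff.mp h with ⟨-, hz⟩ | ⟨-, hz⟩ <;> rw [hz] <;> assumption

lemma u_mem_Icc (i : ZMod (W.n + 2)) : W.u i ∈ Set.Icc (W.lo i) (W.hi i) := by
  obtain ⟨m1, m2, m3, m4⟩ := corners_mem_Icc W i
  rcases W.corners i with ⟨-, h⟩ | ⟨-, h⟩ <;>
    rcases Set.pair_eq_pair_iff.mp h with ⟨hu, -⟩ | ⟨hu, -⟩ <;> rw [hu] <;> assumption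

lemma z_inj : Function.Injective W.z := by
  intro i j hij
  by_contra hne
  exact W.noCommon i j hne (W.lo i) (W.hi i) (W.inner i)
    ⟨z_mem_Icc W i, hij ▸ z_mem_Icc W i⟩

lemma u_ne_z (i j : ZMod (W.n + 2)) : W.u i ≠ W.z j := by
  intro h
  by_cases hij : i = j
  · subst hij
    obtain ⟨hlt1, hlt2, -⟩ := W.inner i
    rcases W.corners i with ⟨h1, h2⟩ | ⟨h1, h2⟩ <;>
      rcases Set.pair_eq_pair_iff.mp h1 with ⟨-, hz⟩ | ⟨-, hz⟩ <;>
      rcases Set.pair_eq_pair_iff.mp h2 with ⟨hu, -⟩ | ⟨hu, -⟩ <;>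
      (rw [hz, hu] at h; simp [Prod.ext_iff] at h; omega)
  · exact W.noCommon i j hij (W.lo i) (W.hi i) (W.inner i)
      ⟨z_mem_Icc W i, h ▸ u_mem_Icc W i⟩

lemma vtx_of_pair {P : Finset Cell} {p q x : ℤ × ℤ} (hp : p ∈ vertexSet P)
    (hq : q ∈ vertexSet P) (hx : x ∈ ({p, q} : Set (ℤ × ℤ))) : x ∈ vertexSet P := by
  rcases hx with rfl | hx
  · exact hp
  · rw [Set.mem_singleton_iff.mp hx]; exact hq

lemma XX_of_pair (K : Type) [Field K] {P : Finset Cell} (p q r s : Vtx P)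
    (h : ({p.1, q.1} : Set (ℤ × ℤ)) = {r.1, s.1}) :
    (X p * X q : polyRing K P) = X r * X s := by
  rcases Set.pair_eq_pair_iff.mp h with ⟨h1, h2⟩ | ⟨h1, h2⟩
  · rw [Subtype.ext h1, Subtype.ext h2]
  · rw [Subtype.ext h1, Subtype.ext h2, mul_comm]

lemma relation (K : Type) [Field K] {P : Finset Cell} (W : ZigZagWalk P)
    (i : ZMod (W.n + 2)) :
    (X ⟨W.v i, W.hv i⟩ * X ⟨W.z i, W.hz i⟩
      - X ⟨W.u i, W.hu i⟩ * X ⟨W.v (i+1), W.hv (i+1)⟩ : polyRing K P) ∈ polyoIdeal K P := by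
  rcases W.corners i with ⟨h1, h2⟩ | ⟨h1, h2⟩
  · have ha : W.lo i ∈ vertexSet P :=
      vtx_of_pair (W.hv i) (W.hz i) (by rw [h1]; exact Set.mem_insert _ _)
    have hb : W.hi i ∈ vertexSet P :=
      vtx_of_pair (W.hv i) (W.hz i) (by rw [h1]; exact Set.mem_insert_of_mem _ rfl)
    have hc : ((W.lo i).1, (W.hi i).2) ∈ vertexSet P :=
      vtx_of_pair (W.hu i) (W.hv (i+1)) (by rw [h2]; exact Set.mem_insert _ _)
    have hd : ((W.hi i).1, (W.lo i).2) ∈ vertexSet P :=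
      vtx_of_pair (W.hu i) (W.hv (i+1)) (by rw [h2]; exact Set.mem_insert_of_mem _ rfl)
    refine Ideal.subset_span ⟨W.lo i, W.hi i, ha, hb, hc, hd, W.inner i, ?_⟩
    rw [XX_of_pair K ⟨W.v i, W.hv i⟩ ⟨W.z i, W.hz i⟩ ⟨W.lo i, ha⟩ ⟨W.hi i, hb⟩ h1,
      XX_of_pair K ⟨W.u i, W.hu i⟩ ⟨W.v (i+1), W.hv (i+1)⟩
        ⟨((W.lo i).1, (W.hi i).2), hc⟩ ⟨((W.hi i).1, (W.lo i).2), hd⟩ h2]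
  · have ha : W.lo i ∈ vertexSet P :=
      vtx_of_pair (W.hu i) (W.hv (i+1)) (by rw [h2]; exact Set.mem_insert _ _)
    have hb : W.hi i ∈ vertexSet P :=
      vtx_of_pair (W.hu i) (W.hv (i+1)) (by rw [h2]; exact Set.mem_insert_of_mem _ rfl)
    have hc : ((W.lo i).1, (W.hi i).2) ∈ vertexSet P :=
      vtx_of_pair (W.hv i) (W.hz i) (by rw [h1]; exact Set.mem_insert _ _)
    have hd : ((W.hi i).1, (W.lo i).2) ∈ vertexSet P :=
      vtx_of_pair (W.hv i) (W.hz i) (by rw [h1]; exact Set.mem_insert_of_mem _ rfl)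
    have hg : (X ⟨W.lo i, ha⟩ * X ⟨W.hi i, hb⟩
        - X ⟨((W.lo i).1, (W.hi i).2), hc⟩ * X ⟨((W.hi i).1, (W.lo i).2), hd⟩ : polyRing K P)
        ∈ polyoIdeal K P :=
      Ideal.subset_span ⟨W.lo i, W.hi i, ha, hb, hc, hd, W.inner i, rfl⟩
    have he : (X ⟨W.v i, W.hv i⟩ * X ⟨W.z i, W.hz i⟩
        - X ⟨W.u i, W.hu i⟩ * X ⟨W.v (i+1), W.hv (i+1)⟩ : polyRing K P)
        = -(X ⟨W.lo i, ha⟩ * X ⟨W.hi i, hb⟩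
          - X ⟨((W.lo i).1, (W.hi i).2), hc⟩ * X ⟨((W.hi i).1, (W.lo i).2), hd⟩) := by
      rw [XX_of_pair K ⟨W.v i, W.hv i⟩ ⟨W.z i, W.hz i⟩
          ⟨((W.lo i).1, (W.hi i).2), hc⟩ ⟨((W.hi i).1, (W.lo i).2), hd⟩ h1,
        XX_of_pair K ⟨W.u i, W.hu i⟩ ⟨W.v (i+1), W.hv (i+1)⟩
          ⟨W.lo i, ha⟩ ⟨W.hi i, hb⟩ h2]
      ring
    rw [he]
    exact neg_mem hg

end ZZW

lemma not_pair_le_single {σ : Type} {p q w : σ} (h : p ≠ q) :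
    ¬ (Finsupp.single p 1 + Finsupp.single q 1 ≤ Finsupp.single w (1 : ℕ)) := by
  classical
  intro hle
  have h1 := hle p
  have h2 := hle q
  simp only [Finsupp.coe_add, Pi.add_apply, Finsupp.single_apply] at h1 h2
  split_ifs at h1 h2 <;> simp_all

theorem stmt7' (K : Type) [Field K] (P : Finset Cell)
    (W : ZigZagWalk P) :
    (∀ i : ZMod (W.n + 2),
      X ⟨W.v i, W.hv i⟩ * zigZagBinomial K W ∈ polyoIdeal K P) ∧
    zigZagBinomial K W ∉ polyoIdeal K P ∧
    (∀ i : ZMod (W.n + 2),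
      (X ⟨W.v i, W.hv i⟩ : polyRing K P) ∉ polyoIdeal K P) := by
  classical
  set q : polyRing K P →+* coordRing K P := Ideal.Quotient.mk (polyoIdeal K P) with hq
  -- Part 1
  have part1 : ∀ i : ZMod (W.n + 2),
      X ⟨W.v i, W.hv i⟩ * zigZagBinomial K W ∈ polyoIdeal K P := by
    intro i
    rw [← Ideal.Quotient.eq_zero_iff_mem]
    have hrel : ∀ k : ZMod (W.n + 2),
        q (X ⟨W.v k, W.hv k⟩) * q (X ⟨W.z k, W.hz k⟩)
          = q (X ⟨W.u k, W.hu k⟩) * q (X ⟨W.v (k+1), W.hv (k+1)⟩) := by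
      intro k
      have h0 := Ideal.Quotient.eq_zero_iff_mem.mpr (relation K W k)
      rw [map_sub, map_mul, map_mul, sub_eq_zero] at h0
      exact h0
    have hcyc := cyc (fun k => q (X ⟨W.z k, W.hz k⟩)) (fun k => q (X ⟨W.u k, W.hu k⟩))
      (fun k => q (X ⟨W.v k, W.hv k⟩)) hrel i
    show q _ = 0
    rw [map_mul, zigZagBinomial, map_sub, map_prod, map_prod, mul_sub, hcyc]
    ring
  refine ⟨part1, ?_, ?_⟩
  -- the generating set
  · -- zigZagBinomial ∉ polyoIdeal
    set ez : Vtx P →₀ ℕ := ∑ k : ZMod (W.n + 2), Finsupp.single ⟨W.z k, W.hz k⟩ 1 with hez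
    set eu : Vtx P →₀ ℕ := ∑ k : ZMod (W.n + 2), Finsupp.single ⟨W.u k, W.hu k⟩ 1 with heu
    have ez_exists : ∀ w : Vtx P, ez w ≠ 0 → ∃ k, W.z k = w.1 := by
      intro w hw
      rw [hez, Finsupp.finset_sum_apply] at hw
      obtain ⟨k, -, hk⟩ := Finset.exists_ne_zero_of_sum_ne_zero hw
      rw [Finsupp.single_apply] at hk
      refine ⟨k, ?_⟩
      by_contra hne
      exact hk (if_neg (fun hh => hne (congrArg Subtype.val hh)))
    have key : ∀ (pv qv : ℤ × ℤ) (hpv : pv ∈ vertexSet P) (hqv : qv ∈ vertexSet P)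
        (a b : ℤ × ℤ), IsInnerInterval P a b → pv ≠ qv →
        pv ∈ Set.Icc a b → qv ∈ Set.Icc a b →
        ¬ (Finsupp.single (⟨pv, hpv⟩ : Vtx P) 1 + Finsupp.single (⟨qv, hqv⟩ : Vtx P) 1 ≤ ez) := by
      intro pv qv hpv hqv a b hInn hne hpI hqI hle
      have hp : ez ⟨pv, hpv⟩ ≠ 0 := by
        have := hle ⟨pv, hpv⟩
        simp only [Finsupp.coe_add, Pi.add_apply, Finsupp.single_eq_same] at this
        omega
      have hq2 : ez ⟨qv, hqv⟩ ≠ 0 := by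
        have := hle ⟨qv, hqv⟩
        simp only [Finsupp.coe_add, Pi.add_apply, Finsupp.single_eq_same] at this
        omega
      obtain ⟨ip, hip⟩ := ez_exists _ hp
      obtain ⟨iq, hiq⟩ := ez_exists _ hq2
      have hip' : W.z ip = pv := hip
      have hiq' : W.z iq = qv := hiq
      have hij : ip ≠ iq := fun hh => hne (by rw [← hip', ← hiq', hh])
      exact W.noCommon ip iq hij a b hInn ⟨hip' ▸ hpI, hiq' ▸ hqI⟩
    have hcz : ∀ f ∈ polyoIdeal K P, MvPolynomial.coeff ez f = 0 := by
      apply coeff_span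
      rintro g ⟨a, b, ha, hb, hc, hd, hInn, rfl⟩ h
      have hlt1 := hInn.1
      have hlt2 := hInn.2.1
      have hab : a ≤ b := ⟨le_of_lt hlt1, le_of_lt hlt2⟩
      rw [XX, XX]
      apply gen_coeff
      · exact key a b ha hb a b hInn
          (fun hh => absurd (congrArg Prod.fst hh) (ne_of_lt hlt1))
          ⟨le_rfl, hab⟩ ⟨hab, le_rfl⟩
      · exact key ((a.1, b.2)) ((b.1, a.2)) hc hd a b hInn
          (fun hh => absurd (congrArg Prod.fst hh) (ne_of_lt hlt1))
          ⟨⟨le_rfl, hab.2⟩, ⟨hab.1, le_rfl⟩⟩ ⟨⟨hab.1, le_rfl⟩, ⟨le_rfl, hab.2⟩⟩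
    intro hmem
    have h0 := hcz _ hmem
    rw [zigZagBinomial,
      prodX Finset.univ (fun k : ZMod (W.n + 2) => (⟨W.z k, W.hz k⟩ : Vtx P)),
      prodX Finset.univ (fun k : ZMod (W.n + 2) => (⟨W.u k, W.hu k⟩ : Vtx P)),
      coeff_sub, coeff_monomial, coeff_monomial, ← hez, ← heu] at h0
    have hne : eu ≠ ez := by
      intro hh
      have h1 : ez ⟨W.z 0, W.hz 0⟩ ≠ 0 := by
        rw [hez, Finsupp.finset_sum_apply]
        intro hzero
        rw [Finset.sum_eq_zero_iff] at hzero
        have := hzero 0 (Finset.mem_univ _)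
        rw [Finsupp.single_eq_same] at this
        exact one_ne_zero this
      have h2 : eu ⟨W.z 0, W.hz 0⟩ = 0 := by
        rw [heu, Finsupp.finset_sum_apply]
        apply Finset.sum_eq_zero
        intro k _
        rw [Finsupp.single_apply, if_neg]
        intro hh2
        exact u_ne_z W k 0 (congrArg Subtype.val hh2)
      rw [hh] at h2
      exact h1 h2
    rw [if_pos rfl, if_neg hne, sub_zero] at h0
    exact one_ne_zero h0
  · -- X v i ∉ polyoIdeal
    intro i hmem
    have hcz : ∀ f ∈ polyoIdeal K P,
        MvPolynomial.coeff (Finsupp.single (⟨W.v i, W.hv i⟩ : Vtx P) 1) f = 0 := by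
      apply coeff_span
      rintro g ⟨a, b, ha, hb, hc, hd, hInn, rfl⟩ h
      obtain ⟨hlt1, -, -⟩ := hInn
      rw [XX, XX]
      apply gen_coeff
      · exact not_pair_le_single
          (fun hh => absurd (congrArg (Prod.fst ∘ Subtype.val) hh) (ne_of_lt hlt1))
      · exact not_pair_le_single
          (fun hh => absurd (congrArg (Prod.fst ∘ Subtype.val) hh) (ne_of_lt hlt1))
    have h0 := hcz _ hmem
    rw [show (X (⟨W.v i, W.hv i⟩ : Vtx P) : polyRing K P)
        = monomial (Finsupp.single ⟨W.v i, W.hv i⟩ 1) 1 from rfl,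
      coeff_monomial, if_pos rfl] at h0
    exact one_ne_zero h0

theorem stmt7 (K : Type) [Field K] (P : Finset Cell) (hP : IsPolyomino P)
    (W : ZigZagWalk P) :
    (∀ i : ZMod (W.n + 2),
      X ⟨W.v i, W.hv i⟩ * zigZagBinomial K W ∈ polyoIdeal K P) ∧
    zigZagBinomial K W ∉ polyoIdeal K P ∧
    (∀ i : ZMod (W.n + 2),
      (X ⟨W.v i, W.hv i⟩ : polyRing K P) ∉ polyoIdeal K P) ∧
    (Ideal.Quotient.mk (polyoIdeal K P) (zigZagBinomial K W) ≠ 0 ∧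
      Ideal.Quotient.mk (polyoIdeal K P) (zigZagBinomial K W) ∉
        nonZeroDivisors (coordRing K P)) ∧
    (∀ i : ZMod (W.n + 2),
      Ideal.Quotient.mk (polyoIdeal K P) (X ⟨W.v i, W.hv i⟩) ≠ 0 ∧
        Ideal.Quotient.mk (polyoIdeal K P) (X ⟨W.v i, W.hv i⟩) ∉
          nonZeroDivisors (coordRing K P)) := by
  obtain ⟨p1, p2, p3⟩ := stmt7' K P W
  refine ⟨p1, p2, p3, ⟨?_, ?_⟩, fun i => ⟨?_, ?_⟩⟩
  · rw [Ne, Ideal.Quotient.eq_zero_iff_mem]; exact p2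
  · intro hnz
    have hz0 : Ideal.Quotient.mk (polyoIdeal K P) (X ⟨W.v 0, W.hv 0⟩) *
        Ideal.Quotient.mk (polyoIdeal K P) (zigZagBinomial K W) = 0 := by
      rw [← map_mul, Ideal.Quotient.eq_zero_iff_mem]; exact p1 0
    have h := (mem_nonZeroDivisors_iff.mp hnz).2 _ hz0
    rw [Ideal.Quotient.eq_zero_iff_mem] at h; exact p3 0 h
  · rw [Ne, Ideal.Quotient.eq_zero_iff_mem]; exact p3 i
  · intro hnz
    have hz0 : Ideal.Quotient.mk (polyoIdeal K P) (zigZagBinomial K W) *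
        Ideal.Quotient.mk (polyoIdeal K P) (X ⟨W.v i, W.hv i⟩) = 0 := by
      rw [← map_mul, mul_comm (zigZagBinomial K W), Ideal.Quotient.eq_zero_iff_mem]
      exact p1 i
    have h := (mem_nonZeroDivisors_iff.mp hnz).2 _ hz0
    rw [Ideal.Quotient.eq_zero_iff_mem] at h; exact p2 h

end PolyoStmt
end
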